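/- arXiv:1904.12841 — 5 statements merged into one kernel-verified Lean document; each statement's English description precedes it below -/
import Mathlib

section
/- Let f : A → B be a homomorphism of commutative rings such that for every b ∈ B there exists a natural number ℓ ≥ 1 with b^ℓ ∈ im(f) (i.e. f is an N-epimorphism). Then the induced map Spec(B) → Spec(A), sending a prime q to f⁻¹(q), is injective. -/
theorem comap_injective_of_N_epimorphism
    {A B : Type*} [CommRing A] [CommRing B] (f : A →+* B)
    (hf : ∀ b : B, ∃ ℓ : ℕ, 1 ≤ ℓ ∧ b ^ ℓ ∈ f.range) :
    Function.Injective (PrimeSpectrum.comap f) := by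
  intro p q h
  have key : ∀ (p q : PrimeSpectrum B),
      PrimeSpectrum.comap f p = PrimeSpectrum.comap f q →
      p.asIdeal ≤ q.asIdeal := by
    intro p q h b hb
    obtain ⟨ℓ, hℓ, a, ha⟩ := hf b
    have hfa : f a ∈ p.asIdeal := ha ▸ Ideal.pow_mem_of_mem _ hb _ hℓ
    have : a ∈ (PrimeSpectrum.comap f p).asIdeal := hfa
    rw [h] at this
    have : b ^ ℓ ∈ q.asIdeal := ha ▸ this
    exact q.isPrime.mem_of_pow_mem _ this
  exact PrimeSpectrum.ext (le_antisymm (key p q h) (key q p h.symm))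
end

section
/- Let f : A → B be a homomorphism of commutative rings whose kernel consists of nilpotent elements and such that every element of B has some positive power in the image of f (i.e. f is an F-isomorphism). Then the induced map Spec(B) → Spec(A) on prime spectra is a bijection. -/
theorem comap_bijective_of_F_isomorphism
    {A B : Type*} [CommRing A] [CommRing B] (f : A →+* B)
    (hker : ∀ a : A, f a = 0 → IsNilpotent a)
    (hpow : ∀ b : B, ∃ n : ℕ, 1 ≤ n ∧ b ^ n ∈ f.range) :
    Function.Bijective (PrimeSpectrum.comap f) := by
  have hint : f.IsIntegral := by
    intro b
    obtain ⟨n, hn, a, ha⟩ := hpow b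
    refine ⟨Polynomial.X ^ n - Polynomial.C a, ?_, ?_⟩
    · exact Polynomial.monic_X_pow_sub_C a (by omega)
    · simp [Polynomial.eval₂_sub, ha]
  constructor
  · -- injectivity
    intro q₁ q₂ h
    have key : ∀ q₁ q₂ : PrimeSpectrum B,
        PrimeSpectrum.comap f q₁ = PrimeSpectrum.comap f q₂ →
        q₁.asIdeal ≤ q₂.asIdeal := by
      intro q₁ q₂ h b hb
      obtain ⟨n, hn, a, ha⟩ := hpow b
      have ha1 : a ∈ (PrimeSpectrum.comap f q₁).asIdeal := by
        show f a ∈ q₁.asIdeal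
        rw [ha]; exact Ideal.pow_mem_of_mem _ hb n (by omega)
      rw [h] at ha1
      have : b ^ n ∈ q₂.asIdeal := ha ▸ ha1
      exact q₂.isPrime.mem_of_pow_mem n this
    exact PrimeSpectrum.ext (le_antisymm (key q₁ q₂ h) (key q₂ q₁ h.symm))
  · -- surjectivity
    intro p
    algebraize [f]
    have : Algebra.IsIntegral A B := ⟨hint⟩
    have hle : (⊥ : Ideal B).comap (algebraMap A B) ≤ p.asIdeal := by
      intro a ha
      have : f a = 0 := ha
      obtain ⟨n, hn⟩ := hker a this
      exact p.isPrime.mem_of_pow_mem n (hn ▸ p.asIdeal.zero_mem)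
    obtain ⟨Q, _, hQprime, hQ⟩ :=
      Ideal.exists_ideal_over_prime_of_isIntegral p.asIdeal ⊥ hle
    exact ⟨⟨Q, hQprime⟩, PrimeSpectrum.ext hQ⟩
end

section
/- Let f : A → B be a homomorphism of commutative rings such that the induced map Spec(B) → Spec(A) is surjective. Then for every finitely generated A-module M, if B ⊗_A M = 0 then M = 0. -/
open TensorProduct

/-- Tensoring with a subsingleton module gives a subsingleton. -/
lemma aux_subsingleton_tensor {R P N : Type*} [CommRing R] [AddCommGroup P] [Module R P]
    [AddCommGroup N] [Module R N] [Subsingleton N] : Subsingleton (P ⊗[R] N) := by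
  refine subsingleton_of_forall_eq 0 fun x => ?_
  induction x using TensorProduct.induction_on with
  | zero => rfl
  | tmul p n => rw [Subsingleton.elim n 0, TensorProduct.tmul_zero]
  | add x y hx hy => rw [hx, hy, add_zero]

/-- Nakayama: for a finite nontrivial module over a local ring, `m • ⊤ ≠ ⊤`. -/
lemma aux_nakayama {R : Type*} [CommRing R] [IsLocalRing R] (N : Type*) [AddCommGroup N]
    [Module R N] [Module.Finite R N] [Nontrivial N] :
    IsLocalRing.maximalIdeal R • (⊤ : Submodule R N) ≠ ⊤ := by
  intro htop
  obtain ⟨r, hr1, hr0⟩ := Submodule.exists_sub_one_mem_and_smul_eq_zero_of_fg_of_le_smul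
    (IsLocalRing.maximalIdeal R) ⊤ Module.Finite.fg_top htop.ge
  by_cases hr : IsUnit r
  · obtain ⟨n, hn⟩ := exists_ne (0 : N)
    have h2 : r • n = 0 := hr0 n trivial
    exact hn ((hr.smul_eq_zero).mp h2)
  · have hrm : r ∈ IsLocalRing.maximalIdeal R := hr
    have : (1 : R) ∈ IsLocalRing.maximalIdeal R := by
      have h3 := sub_mem hrm hr1
      simpa only [sub_sub_cancel] using h3
    exact (IsLocalRing.maximalIdeal.isMaximal R).ne_top (Ideal.eq_top_of_isUnit_mem _ this isUnit_one)

/-- Key lemma: if `K` is a field which is an `A`-algebra whose structure map kills the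
annihilator of a finite module `M`, then `K ⊗[A] M` is nontrivial. -/
lemma aux_nontrivial_tensor_of_annihilator_le_ker
    {A : Type*} [CommRing A] (K : Type*) [Field K] [Algebra A K]
    (M : Type*) [AddCommGroup M] [Module A M] [Module.Finite A M]
    (hann : Module.annihilator A M ≤ RingHom.ker (algebraMap A K)) :
    Nontrivial (K ⊗[A] M) := by
  set p : Ideal A := RingHom.ker (algebraMap A K) with hp
  haveI hpprime : p.IsPrime := RingHom.ker_isPrime _
  set R := Localization.AtPrime p with hR
  -- `K` as an `R`-algebra
  have hunit : ∀ s : p.primeCompl, IsUnit (algebraMap A K s) := by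
    rintro ⟨s, hs⟩
    refine isUnit_iff_ne_zero.mpr fun h0 => hs ?_
    exact RingHom.mem_ker.mpr h0
  let φ : R →+* K := IsLocalization.lift hunit
  letI : Algebra R K := φ.toAlgebra
  haveI : IsScalarTower A R K :=
    IsScalarTower.of_algebraMap_eq' (IsLocalization.lift_comp hunit).symm
  -- `R ⊗[A] M` is nontrivial
  set N := R ⊗[A] M with hN
  have hmem : (⟨p, hpprime⟩ : PrimeSpectrum A) ∈ Module.support A M :=
    (Module.mem_support_iff_of_finite).mpr hann
  haveI : Nontrivial (LocalizedModule p.primeCompl M) := hmem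
  let eN : R ⊗[A] M ≃ₗ[R] LocalizedModule p.primeCompl M :=
    (IsLocalizedModule.isBaseChange p.primeCompl R
      (LocalizedModule.mkLinearMap p.primeCompl M)).equiv
  haveI : Nontrivial N := eN.toEquiv.nontrivial
  haveI : Module.Finite R N := inferInstance
  -- residue field of `R`
  set k := IsLocalRing.ResidueField R with hk
  have hm : IsLocalRing.maximalIdeal R ≤ RingHom.ker φ := by
    rw [← Localization.AtPrime.map_eq_maximalIdeal]
    refine Ideal.map_le_iff_le_comap.mpr fun a ha => ?_
    have : φ (algebraMap A R a) = algebraMap A K a := by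
      rw [← RingHom.comp_apply, IsLocalization.lift_comp]
    simp only [Ideal.mem_comap, RingHom.mem_ker, this]
    exact this.trans ha
  let ψ : k →+* K := Ideal.Quotient.lift _ φ fun x hx => hm hx
  letI : Algebra k K := ψ.toAlgebra
  haveI : IsScalarTower R k K := IsScalarTower.of_algebraMap_eq' rfl
  -- `k ⊗[R] N` is nontrivial by Nakayama
  have hne : IsLocalRing.maximalIdeal R • (⊤ : Submodule R N) ≠ ⊤ := aux_nakayama N
  haveI : Nontrivial (N ⧸ (IsLocalRing.maximalIdeal R • (⊤ : Submodule R N))) :=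
    Submodule.Quotient.nontrivial_iff.mpr hne
  haveI : Nontrivial (k ⊗[R] N) :=
    (quotTensorEquivQuotSMul N (IsLocalRing.maximalIdeal R)).toEquiv.nontrivial
  -- `K` is faithfully flat over the field `k`
  haveI : Module.FaithfullyFlat k K := inferInstance
  haveI : Nontrivial (K ⊗[k] (k ⊗[R] N)) :=
    Module.FaithfullyFlat.lTensor_nontrivial k K (k ⊗[R] N)
  haveI : Nontrivial (K ⊗[R] N) :=
    (TensorProduct.AlgebraTensorModule.cancelBaseChange R k K K N).symm.toEquiv.nontrivial
  exact (TensorProduct.AlgebraTensorModule.cancelBaseChange A R K K M).symm.toEquiv.nontrivial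

theorem fg_module_trivial_of_comap_surjective
    {A B : Type*} [CommRing A] [CommRing B] [Algebra A B]
    (hsurj : Function.Surjective (PrimeSpectrum.comap (algebraMap A B)))
    (M : Type*) [AddCommGroup M] [Module A M] [Module.Finite A M]
    (h : Subsingleton (B ⊗[A] M)) : Subsingleton M := by
  by_contra hM
  haveI : Nontrivial M := not_subsingleton_iff_nontrivial.mp hM
  have hnes : (Module.support A M).Nonempty := by
    rw [Set.nonempty_iff_ne_empty]
    exact fun he => hM (Module.support_eq_empty_iff.mp he)
  obtain ⟨p, hp⟩ := hnes
  obtain ⟨q, hq⟩ := hsurj p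
  haveI : q.asIdeal.IsPrime := q.2
  set K := FractionRing (B ⧸ q.asIdeal) with hK
  -- `K ⊗[A] M` is subsingleton since `B ⊗[A] M` is
  haveI : Subsingleton (K ⊗[B] (B ⊗[A] M)) := aux_subsingleton_tensor
  haveI hsub : Subsingleton (K ⊗[A] M) :=
    (TensorProduct.AlgebraTensorModule.cancelBaseChange A B K K M).symm.toEquiv.subsingleton
  -- but it is nontrivial by the key lemma
  have hker : Module.annihilator A M ≤ RingHom.ker (algebraMap A K) := by
    have hannp : Module.annihilator A M ≤ p.asIdeal := Module.annihilator_le_of_mem_support hp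
    refine hannp.trans fun x hx => ?_
    have hxq : algebraMap A B x ∈ q.asIdeal := by
      rw [← hq] at hx
      exact hx
    show algebraMap A K x = 0
    rw [IsScalarTower.algebraMap_apply A B K, IsScalarTower.algebraMap_apply B (B ⧸ q.asIdeal) K,
      Ideal.Quotient.algebraMap_eq, Ideal.Quotient.eq_zero_iff_mem.mpr hxq, map_zero]
  haveI := aux_nontrivial_tensor_of_annihilator_le_ker K M hker
  exact false_of_nontrivial_of_subsingleton (K ⊗[A] M)
end

section
/- Consider a pushout square of commutative rings, i.e. ring homomorphisms i : R → S, f : R → A, and B = A ⊗_R S with the induced maps j : A → B and g : S → B. If the base-change functor A ⊗_R (−) on R-modules is conservative, then the base-change functor B ⊗_S (−) on S-modules is conservative. -/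
open TensorProduct

theorem pushout_baseChange_conservative
    {R S A : Type} [CommRing R] [CommRing S] [CommRing A]
    [Algebra R S] [Algebra R A]
    (hcons : ∀ (M : Type) [AddCommGroup M] [Module R M],
      Subsingleton (A ⊗[R] M) → Subsingleton M)
    (N : Type) [AddCommGroup N] [Module S N]
    (h : Subsingleton ((S ⊗[R] A) ⊗[S] N)) : Subsingleton N := by
  letI : Module R N := Module.compHom N (algebraMap R S)
  haveI : IsScalarTower R S N := ⟨fun r s n => by
    show (r • s) • n = (algebraMap R S r) • s • n
    rw [Algebra.smul_def, mul_smul]⟩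
  have e1 : N ⊗[S] (S ⊗[R] A) ≃ₗ[S] N ⊗[R] A :=
    TensorProduct.AlgebraTensorModule.cancelBaseChange R S S N A
  have e : A ⊗[R] N ≃ (S ⊗[R] A) ⊗[S] N :=
    ((TensorProduct.comm R A N).toEquiv.trans e1.symm.toEquiv).trans
      (TensorProduct.comm S N (S ⊗[R] A)).toEquiv
  have : Subsingleton (A ⊗[R] N) := e.subsingleton
  exact hcons N this
end

section
/- Let k be a field of characteristic p > 0 and let f : A → B be a homomorphism of commutative k-algebras such that for every b ∈ B there is n ≥ 0 with b^(p^n) ∈ im(f). If ker(f) consists of nilpotent elements, then the induced map Spec(B) → Spec(A) is a homeomorphism onto its image, and is bijective. -/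
theorem comap_bijective_isEmbedding_of_char_p_F_isomorphism
    {k A B : Type*} [Field k] [CommRing A] [CommRing B]
    [Algebra k A] [Algebra k B] (p : ℕ) [Fact p.Prime] [CharP k p]
    (f : A →ₐ[k] B)
    (hpow : ∀ b : B, ∃ n : ℕ, b ^ p ^ n ∈ f.toRingHom.range)
    (hker : ∀ a : A, f a = 0 → IsNilpotent a) :
    Function.Bijective (PrimeSpectrum.comap f.toRingHom) ∧
    Topology.IsEmbedding (PrimeSpectrum.comap f.toRingHom) := by
  have hp : p.Prime := Fact.out
  rcases subsingleton_or_nontrivial B with hB | hB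
  · -- B trivial ⇒ A trivial ⇒ both spectra empty
    have hA : Subsingleton A := by
      obtain ⟨n, hn⟩ := hker 1 (Subsingleton.elim _ _)
      simp only [one_pow] at hn
      exact subsingleton_of_zero_eq_one hn.symm
    haveI hEA : IsEmpty (PrimeSpectrum A) := inferInstance
    haveI hEB : IsEmpty (PrimeSpectrum B) := inferInstance
    refine ⟨⟨fun x => hEB.elim x, fun x => hEA.elim x⟩, ?_⟩
    refine ⟨⟨?_⟩, fun x => hEB.elim x⟩
    ext s
    constructor
    · intro _
      exact ⟨Set.univ, isOpen_univ, by ext x; exact hEB.elim x⟩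
    · intro _
      have : s = (∅ : Set (PrimeSpectrum B)) := by ext x; exact hEB.elim x
      rw [this]; exact isOpen_empty
  · haveI : CharP B p := charP_of_injective_algebraMap (algebraMap k B).injective p
    haveI : ExpChar B p := ExpChar.prime hp
    -- if f x = f y then x ∈ P ↔ y ∈ P for any prime P
    have hnil : ∀ (x y : A) (P : Ideal A) (_ : P.IsPrime),
        f x = f y → x ∈ P → y ∈ P := by
      intro x y P hP hxy hx
      obtain ⟨n, hn⟩ := hker (y - x) (by simp [hxy])
      have hmem : (y - x) ^ n ∈ P := hn ▸ P.zero_mem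
      have : y - x ∈ P := hP.mem_of_pow_mem n hmem
      simpa using P.add_mem this hx
    -- injectivity of comap
    have hinj : Function.Injective (PrimeSpectrum.comap f.toRingHom) := by
      intro Q₁ Q₂ hQ
      have key : ∀ Q₁ Q₂ : PrimeSpectrum B,
          PrimeSpectrum.comap f.toRingHom Q₁ = PrimeSpectrum.comap f.toRingHom Q₂ →
          Q₁.asIdeal ≤ Q₂.asIdeal := by
        intro Q₁ Q₂ hQ b hb
        obtain ⟨n, a, ha⟩ := hpow b
        have h1 : f a ∈ Q₁.asIdeal := ha ▸ Q₁.asIdeal.pow_mem_of_mem hb _ (pow_pos hp.pos n)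
        have h2 : a ∈ Q₁.asIdeal.comap f.toRingHom := h1
        have he : Q₁.asIdeal.comap f.toRingHom = Q₂.asIdeal.comap f.toRingHom :=
          congrArg PrimeSpectrum.asIdeal hQ
        have h3 : a ∈ Q₂.asIdeal.comap f.toRingHom := he ▸ h2
        have h4 : b ^ p ^ n ∈ Q₂.asIdeal := ha ▸ h3
        exact Q₂.isPrime.mem_of_pow_mem _ h4
      exact PrimeSpectrum.ext (le_antisymm (key _ _ hQ) (key _ _ hQ.symm))
    -- surjectivity of comap
    have hsurj : Function.Surjective (PrimeSpectrum.comap f.toRingHom) := by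
      intro P
      set Pi := P.asIdeal with hPi
      have hPp : Pi.IsPrime := P.isPrime
      -- the candidate prime in B
      let Q : Ideal B :=
        { carrier := {b | ∃ n : ℕ, ∃ a ∈ Pi, f a = b ^ p ^ n}
          zero_mem' := ⟨0, 0, Pi.zero_mem, by simp [hp.pos]⟩
          add_mem' := by
            rintro b c ⟨n, a, ha, hfa⟩ ⟨m, a', ha', hfa'⟩
            refine ⟨n + m, a ^ p ^ m + a' ^ p ^ n, ?_, ?_⟩
            · exact Pi.add_mem (Pi.pow_mem_of_mem ha _ (pow_pos hp.pos m))
                (Pi.pow_mem_of_mem ha' _ (pow_pos hp.pos n))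
            · rw [add_pow_char_pow, map_add, map_pow, map_pow, hfa, hfa',
                ← pow_mul, ← pow_mul, ← pow_add, ← pow_add, Nat.add_comm m n]
          smul_mem' := by
            rintro r b ⟨n, a, ha, hfa⟩
            obtain ⟨m, c, hc0⟩ := hpow r
            have hc : f c = r ^ p ^ m := hc0
            refine ⟨m + n, c ^ p ^ n * a ^ p ^ m, ?_, ?_⟩
            · exact Pi.mul_mem_left _ (Pi.pow_mem_of_mem ha _ (pow_pos hp.pos m))
            · rw [smul_eq_mul, mul_pow, map_mul, map_pow, map_pow, hfa, hc,
                ← pow_mul, ← pow_mul, ← pow_add, ← pow_add, Nat.add_comm n m] }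
      have hQmem : ∀ b : B, b ∈ Q ↔ ∃ n : ℕ, ∃ a ∈ Pi, f a = b ^ p ^ n := fun _ => Iff.rfl
      have hQp : Q.IsPrime := by
        constructor
        · intro htop
          have h1 : (1 : B) ∈ Q := htop ▸ Submodule.mem_top
          obtain ⟨n, a, ha, hfa⟩ := h1
          rw [one_pow] at hfa
          have : (1 : A) ∈ Pi := hnil a 1 Pi hPp (by simp [hfa]) ha
          exact hPp.ne_top (Ideal.eq_top_of_isUnit_mem _ this isUnit_one)
        · intro b c hbc
          obtain ⟨n, a, ha, hfa⟩ := hbc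
          obtain ⟨m, u, hu0⟩ := hpow b
          obtain ⟨l, v, hv0⟩ := hpow c
          have hu : f u = b ^ p ^ m := hu0
          have hv : f v = c ^ p ^ l := hv0
          -- raise everything to exponent p^(n+m+l)
          have hb : f (u ^ p ^ (n + l)) = b ^ p ^ (n + m + l) := by
            rw [map_pow, hu, ← pow_mul, ← pow_add]; ring_nf
          have hc : f (v ^ p ^ (n + m)) = c ^ p ^ (n + m + l) := by
            rw [map_pow, hv, ← pow_mul, ← pow_add]; ring_nf
          have hac : f (a ^ p ^ (m + l)) = (b * c) ^ p ^ (n + m + l) := by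
            rw [map_pow, hfa, ← pow_mul, ← pow_add]; ring_nf
          have hmul : f (u ^ p ^ (n + l) * v ^ p ^ (n + m)) = f (a ^ p ^ (m + l)) := by
            rw [map_mul, hb, hc, hac, mul_pow]
          have hPP : u ^ p ^ (n + l) * v ^ p ^ (n + m) ∈ Pi :=
            hnil _ _ Pi hPp hmul.symm (Pi.pow_mem_of_mem ha _ (pow_pos hp.pos _))
          rcases hPp.mem_or_mem hPP with h | h
          · left; exact ⟨n + m + l, u ^ p ^ (n + l), h, hb⟩
          · right; exact ⟨n + m + l, v ^ p ^ (n + m), h, hc⟩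
      refine ⟨⟨Q, hQp⟩, ?_⟩
      -- comap of Q equals P
      apply PrimeSpectrum.ext
      show Q.comap f.toRingHom = Pi
      apply le_antisymm
      · intro a ha
        obtain ⟨n, c, hc, hfc⟩ := ha
        have : f c = f (a ^ p ^ n) := by rw [hfc]; simp
        exact hPp.mem_of_pow_mem _ (hnil c (a ^ p ^ n) Pi hPp this hc)
      · intro a ha
        exact ⟨0, a, ha, by simp⟩
    -- integrality gives a closed map
    have hint : f.toRingHom.IsIntegral := by
      intro b
      obtain ⟨n, a, ha⟩ := hpow b
      have ha' : f a = b ^ p ^ n := ha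
      refine ⟨Polynomial.X ^ p ^ n - Polynomial.C a, ?_, ?_⟩
      · exact Polynomial.monic_X_pow_sub_C a (pow_pos hp.pos n).ne'
      · simp [ha', sub_eq_zero]
    have hclosed : IsClosedMap (PrimeSpectrum.comap f.toRingHom) :=
      PrimeSpectrum.isClosedMap_comap_of_isIntegral _ hint
    exact ⟨⟨hinj, hsurj⟩,
      (Topology.IsClosedEmbedding.of_continuous_injective_isClosedMap
        (PrimeSpectrum.continuous_comap f.toRingHom) hinj hclosed).toIsEmbedding⟩
end
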